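/- Let A, B be symmetric positive-definite n×n matrices with eigenvalues e^{α₁} ≥ ... ≥ e^{αₙ} and e^{β₁} ≥ ... ≥ e^{βₙ} respectively, and let e^{γ₁} ≥ ... ≥ e^{γₙ} be the eigenvalues of A^{1/2} B A^{1/2}. Then Σᵢ γᵢ² ≤ (sqrt(Σᵢ αᵢ²) + sqrt(Σᵢ βᵢ²))². -/

import Mathlib

open Matrix Real

noncomputable def matFun {n : ℕ} (f : ℝ → ℝ) (A : Matrix (Fin n) (Fin n) ℝ) :
    Matrix (Fin n) (Fin n) ℝ :=
  if hA : A.IsHermitian then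
    (hA.eigenvectorUnitary : Matrix (Fin n) (Fin n) ℝ) *
      Matrix.diagonal (fun i => f (hA.eigenvalues i)) *
      (star (hA.eigenvectorUnitary : Matrix (Fin n) (Fin n) ℝ))
  else 0

/-- The logarithm of a positive-definite matrix, defined spectrally. -/
noncomputable def matLog {n : ℕ} (A : Matrix (Fin n) (Fin n) ℝ) :
    Matrix (Fin n) (Fin n) ℝ := matFun Real.log A

/-- The positive square root of a positive-definite matrix, defined spectrally. -/
noncomputable def matSqrt {n : ℕ} (A : Matrix (Fin n) (Fin n) ℝ) :
    Matrix (Fin n) (Fin n) ℝ := matFun Real.sqrt A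

/-- `A^{-1/2}` for a positive-definite matrix, defined spectrally. -/
noncomputable def matSqrtInv {n : ℕ} (A : Matrix (Fin n) (Fin n) ℝ) :
    Matrix (Fin n) (Fin n) ℝ := matFun (fun t => (Real.sqrt t)⁻¹) A

/-- The Hilbert–Schmidt (Frobenius) norm of a real square matrix. -/
noncomputable def hsNorm {n : ℕ} (T : Matrix (Fin n) (Fin n) ℝ) : ℝ :=
  Real.sqrt ((Tᵀ * T).trace)

/-- `dist(A,B) = ‖log (A^{-1/2} B A^{-1/2})‖_HS`. -/
noncomputable def pdist {n : ℕ} (A B : Matrix (Fin n) (Fin n) ℝ) : ℝ :=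
  hsNorm (matLog (matSqrtInv A * B * matSqrtInv A))


section CB
open Matrix Finset Equiv

variable {R : Type*} [CommRing R] {k n : ℕ}

local notation "ε" σ => ((Equiv.Perm.sign σ : ℤ) : R)

theorem cb_aux (A : Matrix (Fin k) (Fin n) R) (B : Matrix (Fin n) (Fin k) R)
    {p : Fin k → Fin n} (H : ¬Function.Injective p) :
    (∑ σ : Equiv.Perm (Fin k), (ε σ) * ∏ x, A (σ x) (p x) * B (p x) x) = 0 := by
  obtain ⟨i, j, hpij, hij⟩ : ∃ i j, p i = p j ∧ i ≠ j := by
    rw [Function.Injective] at H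
    push_neg at H
    obtain ⟨i, j, h1, h2⟩ := H
    exact ⟨i, j, h1, h2⟩
  exact
    Finset.sum_involution (fun σ _ => σ * Equiv.swap i j)
      (fun σ _ => by
        have : (∏ x, A (σ x) (p x)) = ∏ x, A ((σ * Equiv.swap i j) x) (p x) :=
          Fintype.prod_equiv (Equiv.swap i j) _ _ (by simp [Equiv.apply_swap_eq_self hpij])
        simp [this, Equiv.Perm.sign_swap hij, -Equiv.Perm.sign_swap', Finset.prod_mul_distrib])
      (fun σ _ _ => (not_congr Equiv.mul_swap_eq_iff).mpr hij) (fun _ _ => Finset.mem_univ _)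
      fun σ _ => Equiv.mul_swap_involutive i j σ

theorem map_orderEmbOfFin {α : Type*} [LinearOrder α] (S : Finset α) {k : ℕ} (h : S.card = k) :
    Finset.univ.map (S.orderEmbOfFin h).toEmbedding = S := by
  ext x
  simp only [Finset.mem_map, Finset.mem_univ, true_and, RelEmbedding.coe_toEmbedding]
  constructor
  · rintro ⟨i, rfl⟩; exact S.orderEmbOfFin_mem h i
  · intro hx
    have : x ∈ Set.range (S.orderEmbOfFin h) := by
      rw [S.range_orderEmbOfFin h]; exact hx
    obtain ⟨i, hi⟩ := this
    exact ⟨i, hi⟩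

theorem cauchyBinet (A : Matrix (Fin k) (Fin n) R) (B : Matrix (Fin n) (Fin k) R) :
    det (A * B) = ∑ S : {S : Finset (Fin n) // S.card = k},
      det (A.submatrix id (S.1.orderEmbOfFin S.2)) * det (B.submatrix (S.1.orderEmbOfFin S.2) id) := by
  classical
  have himg : ∀ (S : Finset (Fin n)) (hS : S.card = k) (τ : Equiv.Perm (Fin k)),
      Finset.univ.image (fun i => (S.orderEmbOfFin hS) (τ i)) = S := by
    intro S hS τ
    have hcomp : (fun i => (S.orderEmbOfFin hS) (τ i)) = ⇑(S.orderEmbOfFin hS) ∘ ⇑τ := rfl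
    rw [hcomp, ← Finset.image_image, Finset.image_univ_equiv]
    have h2 := map_orderEmbOfFin S hS
    rw [Finset.map_eq_image] at h2
    simpa using h2
  have h1 : det (A * B) = ∑ p : Fin k → Fin n, ∑ σ : Equiv.Perm (Fin k),
      (ε σ) * ∏ i, A (σ i) (p i) * B (p i) i := by
    simp only [det_apply', mul_apply, Finset.prod_univ_sum, Finset.mul_sum,
      Fintype.piFinset_univ]
    rw [Finset.sum_comm]
  have h2 : ∑ p : Fin k → Fin n, ∑ σ : Equiv.Perm (Fin k),
      (ε σ) * ∏ i, A (σ i) (p i) * B (p i) i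
      = ∑ p ∈ Finset.univ.filter (fun p : Fin k → Fin n => Function.Injective p),
        ∑ σ : Equiv.Perm (Fin k), (ε σ) * ∏ i, A (σ i) (p i) * B (p i) i := by
    refine (Finset.sum_subset (Finset.filter_subset _ _) fun p _ hp => cb_aux A B ?_).symm
    simpa using hp
  have h3 : ∑ x : {S : Finset (Fin n) // S.card = k} × Equiv.Perm (Fin k),
        ∑ σ : Equiv.Perm (Fin k), (ε σ) *
          ∏ i, A (σ i) (x.1.1.orderEmbOfFin x.1.2 (x.2 i)) * B (x.1.1.orderEmbOfFin x.1.2 (x.2 i)) i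
      = ∑ p ∈ Finset.univ.filter (fun p : Fin k → Fin n => Function.Injective p),
        ∑ σ : Equiv.Perm (Fin k), (ε σ) * ∏ i, A (σ i) (p i) * B (p i) i := by
    refine Finset.sum_nbij (fun x => fun i => x.1.1.orderEmbOfFin x.1.2 (x.2 i)) ?_ ?_ ?_ ?_
    · intro x _
      simp only [Finset.mem_filter, Finset.mem_univ, true_and]
      exact ((x.1.1.orderEmbOfFin x.1.2).injective).comp x.2.injective
    · rintro ⟨⟨S1, hS1⟩, τ1⟩ - ⟨⟨S2, hS2⟩, τ2⟩ - hxy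
      have hxy' : (fun i => (S1.orderEmbOfFin hS1) (τ1 i)) =
          (fun i => (S2.orderEmbOfFin hS2) (τ2 i)) := hxy
      have hSeq : S1 = S2 := by rw [← himg S1 hS1 τ1, hxy', himg]
      subst hSeq
      simp only [Prod.mk.injEq, Subtype.mk.injEq, true_and]
      refine Equiv.ext fun i => (S1.orderEmbOfFin hS1).injective ?_
      exact congrFun hxy' i
    · intro p hp
      simp only [Finset.coe_filter, Finset.mem_univ, true_and, Set.mem_setOf_eq] at hp
      set S : Finset (Fin n) := Finset.univ.image p with hSdef
      have hcard : S.card = k := by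
        rw [hSdef, Finset.card_image_of_injective _ hp, Finset.card_univ, Fintype.card_fin]
      have hmem : ∀ i, p i ∈ S := fun i => Finset.mem_image_of_mem p (Finset.mem_univ i)
      have htinj : Function.Injective
          (fun i => (S.orderIsoOfFin hcard).symm ⟨p i, hmem i⟩ : Fin k → Fin k) := by
        intro i j hij
        apply hp
        have := congrArg (fun z => ((S.orderIsoOfFin hcard) z : Fin n)) hij
        simpa using this
      refine ⟨⟨⟨S, hcard⟩, Equiv.ofBijective _ (Finite.injective_iff_bijective.mp htinj)⟩,
        by simp, ?_⟩
      funext i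
      simp only [Equiv.ofBijective_apply]
      rw [← Finset.coe_orderIsoOfFin_apply]
      simp
    · intro x _
      rfl
  rw [h1, h2, ← h3, Fintype.sum_prod_type]
  refine Finset.sum_congr rfl fun S _ => ?_
  set e := S.1.orderEmbOfFin S.2 with hedef
  calc ∑ τ : Equiv.Perm (Fin k), ∑ σ : Equiv.Perm (Fin k),
        (ε σ) * ∏ i, A (σ i) (e (τ i)) * B (e (τ i)) i
      = ∑ τ : Equiv.Perm (Fin k), ∑ σ : Equiv.Perm (Fin k),
        ((ε σ) * ∏ i, A (σ i) (e (τ i))) * ∏ i, B (e (τ i)) i := by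
        simp_rw [Finset.prod_mul_distrib, ← mul_assoc]
    _ = ∑ τ : Equiv.Perm (Fin k),
        ((ε τ) * det (A.submatrix id e)) * ∏ i, B (e (τ i)) i := by
        refine Finset.sum_congr rfl fun τ _ => ?_
        rw [← Finset.sum_mul]
        congr 1
        have hprod : ∀ σ : Equiv.Perm (Fin k),
            (∏ i, A (σ i) (e (τ i))) = ∏ i, A (σ (τ⁻¹ i)) (e i) := by
          intro σ
          have := Equiv.prod_comp τ (fun j => A (σ (τ⁻¹ j)) (e j))
          simp only [Equiv.Perm.inv_def, Equiv.symm_apply_apply] at this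
          exact this
        simp_rw [hprod]
        rw [det_apply', Finset.mul_sum]
        rw [← Equiv.sum_comp (Equiv.mulRight τ)
          (fun σ => (ε σ) * ∏ i, A (σ (τ⁻¹ i)) (e i))]
        refine Finset.sum_congr rfl fun ρ _ => ?_
        have h4 : ∀ i, (Equiv.mulRight τ ρ) (τ⁻¹ i) = ρ i := fun i => by
          simp [Equiv.Perm.mul_apply]
        simp only [h4, submatrix_apply, id_eq]
        have h5 : ((Equiv.Perm.sign ((Equiv.mulRight τ) ρ) : ℤ) : R) = (ε ρ) * (ε τ) := by
          simp [Equiv.Perm.sign_mul, Units.val_mul]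
        rw [h5]
        ring
    _ = det (A.submatrix id e) * ∑ τ : Equiv.Perm (Fin k),
        (ε τ) * ∏ i, (B.submatrix (⇑e) id) (τ i) i := by
        rw [Finset.mul_sum]
        refine Finset.sum_congr rfl fun τ _ => ?_
        simp only [submatrix_apply, id_eq]
        ring
    _ = det (A.submatrix id e) * det (B.submatrix (⇑e) id) := by
        rw [← det_apply']

theorem prod_orderEmbOfFin {k n : ℕ} (S : Finset (Fin n)) (h : S.card = k) (f : Fin n → ℝ) :
    (∏ i : Fin k, f (S.orderEmbOfFin h i)) = ∏ i ∈ S, f i := by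
  conv_rhs => rw [← map_orderEmbOfFin S h]
  rw [Finset.prod_map]
  rfl

theorem det_isometry_diag_le {n k : ℕ} (d : Fin n → ℝ) (W : Matrix (Fin n) (Fin k) ℝ)
    (hW : Wᵀ * W = 1) (c : ℝ)
    (hc : ∀ S : Finset (Fin n), S.card = k → ∏ i ∈ S, d i ≤ c) :
    det (Wᵀ * Matrix.diagonal d * W) ≤ c := by
  classical
  have hone := cauchyBinet Wᵀ W
  rw [hW, det_one] at hone
  have hdet : ∀ S : {S : Finset (Fin n) // S.card = k},
      det (Wᵀ.submatrix id (S.1.orderEmbOfFin S.2)) = det (W.submatrix (S.1.orderEmbOfFin S.2) id) := by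
    intro S
    rw [← Matrix.transpose_submatrix, Matrix.det_transpose]
  rw [Matrix.mul_assoc, ← Matrix.mul_assoc, cauchyBinet (Wᵀ * Matrix.diagonal d) W]
  have hterm : ∀ S : {S : Finset (Fin n) // S.card = k},
      det ((Wᵀ * Matrix.diagonal d).submatrix id (S.1.orderEmbOfFin S.2)) *
        det (W.submatrix (S.1.orderEmbOfFin S.2) id)
      = (∏ i ∈ S.1, d i) * (det (W.submatrix (S.1.orderEmbOfFin S.2) id)) ^ 2 := by
    intro S
    have hsub : (Wᵀ * Matrix.diagonal d).submatrix id (S.1.orderEmbOfFin S.2)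
        = (Wᵀ.submatrix id (S.1.orderEmbOfFin S.2)) *
          Matrix.diagonal (fun j => d (S.1.orderEmbOfFin S.2 j)) := by
      ext i j
      simp [Matrix.mul_diagonal, Matrix.submatrix_apply]
    rw [hsub, det_mul, det_diagonal, prod_orderEmbOfFin S.1 S.2 d, hdet]
    ring
  calc ∑ S : {S : Finset (Fin n) // S.card = k},
        det ((Wᵀ * Matrix.diagonal d).submatrix id (S.1.orderEmbOfFin S.2)) *
          det (W.submatrix (S.1.orderEmbOfFin S.2) id)
      = ∑ S : {S : Finset (Fin n) // S.card = k},
        (∏ i ∈ S.1, d i) * (det (W.submatrix (S.1.orderEmbOfFin S.2) id)) ^ 2 :=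
        Finset.sum_congr rfl fun S _ => hterm S
    _ ≤ ∑ S : {S : Finset (Fin n) // S.card = k},
        c * (det (W.submatrix (S.1.orderEmbOfFin S.2) id)) ^ 2 :=
        Finset.sum_le_sum fun S _ =>
          mul_le_mul_of_nonneg_right (hc S.1 S.2) (sq_nonneg _)
    _ = c * ∑ S : {S : Finset (Fin n) // S.card = k},
        (det (W.submatrix (S.1.orderEmbOfFin S.2) id)) ^ 2 := by rw [Finset.mul_sum]
    _ = c := by
      have : ∑ S : {S : Finset (Fin n) // S.card = k},
          (det (W.submatrix (S.1.orderEmbOfFin S.2) id)) ^ 2 = 1 := by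
        rw [hone]
        refine Finset.sum_congr rfl fun S _ => ?_
        rw [hdet S]
        ring
      rw [this, mul_one]

end CB

open Finset in
theorem det_conj_le {n k : ℕ} {H : Matrix (Fin n) (Fin n) ℝ} (hH : H.IsHermitian)
    (V : Matrix (Fin n) (Fin k) ℝ) (hV : Vᵀ * V = 1) (c : ℝ)
    (hc : ∀ S : Finset (Fin n), S.card = k → ∏ i ∈ S, hH.eigenvalues i ≤ c) :
    (Vᵀ * H * V).det ≤ c := by
  set U : Matrix (Fin n) (Fin n) ℝ := (hH.eigenvectorUnitary : Matrix (Fin n) (Fin n) ℝ) with hU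
  have hstar : star U = Uᵀ := by
    rw [Matrix.star_eq_conjTranspose, Matrix.conjTranspose_eq_transpose_of_trivial]
  have hUUt : U * Uᵀ = 1 := by
    rw [← hstar]; exact (Matrix.mem_unitaryGroup_iff).mp (hH.eigenvectorUnitary).2
  have hHspec : H = U * Matrix.diagonal hH.eigenvalues * Uᵀ := by
    have h := hH.spectral_theorem
    simp only [RCLike.ofReal_real_eq_id, Function.id_comp] at h
    rwa [Unitary.conjStarAlgAut_apply, hstar] at h
  have hWW : (Uᵀ * V)ᵀ * (Uᵀ * V) = 1 := by
    rw [Matrix.transpose_mul, Matrix.transpose_transpose, ← Matrix.mul_assoc,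
      Matrix.mul_assoc (Vᵀ) U (Uᵀ), hUUt, Matrix.mul_one, hV]
  have hconj : Vᵀ * H * V = (Uᵀ * V)ᵀ * Matrix.diagonal hH.eigenvalues * (Uᵀ * V) := by
    rw [Matrix.transpose_mul, Matrix.transpose_transpose]
    conv_lhs => rw [hHspec]
    simp only [Matrix.mul_assoc]
  rw [hconj]
  exact det_isometry_diag_le _ _ hWW c hc

theorem real_herm_star_eq {n : ℕ} (U : Matrix (Fin n) (Fin n) ℝ) : star U = Uᵀ := by
  rw [Matrix.star_eq_conjTranspose, Matrix.conjTranspose_eq_transpose_of_trivial]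

theorem matSqrt_transpose {n : ℕ} {A : Matrix (Fin n) (Fin n) ℝ} (hA : A.IsHermitian) :
    (matSqrt A)ᵀ = matSqrt A := by
  rw [matSqrt, matFun, dif_pos hA, real_herm_star_eq]
  rw [Matrix.transpose_mul, Matrix.transpose_mul, Matrix.transpose_transpose,
    Matrix.diagonal_transpose, Matrix.mul_assoc]

theorem matSqrt_mul_self {n : ℕ} {A : Matrix (Fin n) (Fin n) ℝ} (hA : A.IsHermitian)
    (hnn : ∀ i, 0 ≤ hA.eigenvalues i) :
    matSqrt A * matSqrt A = A := by
  set U : Matrix (Fin n) (Fin n) ℝ := (hA.eigenvectorUnitary : Matrix (Fin n) (Fin n) ℝ) with hU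
  have hUtU : Uᵀ * U = 1 := by
    rw [← real_herm_star_eq]; exact (Matrix.mem_unitaryGroup_iff').mp (hA.eigenvectorUnitary).2
  have hdef : matSqrt A = U * Matrix.diagonal (fun i => Real.sqrt (hA.eigenvalues i)) * Uᵀ := by
    rw [matSqrt, matFun, dif_pos hA, real_herm_star_eq]
  rw [hdef]
  have : U * Matrix.diagonal (fun i => Real.sqrt (hA.eigenvalues i)) * Uᵀ *
      (U * Matrix.diagonal (fun i => Real.sqrt (hA.eigenvalues i)) * Uᵀ)
      = U * (Matrix.diagonal (fun i => Real.sqrt (hA.eigenvalues i)) *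
        Matrix.diagonal (fun i => Real.sqrt (hA.eigenvalues i))) * Uᵀ := by
    simp only [Matrix.mul_assoc]
    rw [← Matrix.mul_assoc (Uᵀ) U, hUtU, Matrix.one_mul]
  rw [this, Matrix.diagonal_mul_diagonal]
  have hsq : (fun i => Real.sqrt (hA.eigenvalues i) * Real.sqrt (hA.eigenvalues i))
      = hA.eigenvalues := by
    funext i; exact Real.mul_self_sqrt (hnn i)
  rw [hsq]
  have h := hA.spectral_theorem
  simp only [RCLike.ofReal_real_eq_id, Function.id_comp] at h
  rw [Unitary.conjStarAlgAut_apply, real_herm_star_eq] at h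
  exact h.symm

open Finset in
theorem sum_subset_le_topk {n k : ℕ} (hk : k ≤ n) (α : Fin n → ℝ) (hα : Antitone α)
    (T : Finset (Fin n)) (hT : T.card = k) :
    ∑ i ∈ T, α i ≤ ∑ i : Fin k, α (Fin.castLE hk i) := by
  classical
  set F := Finset.univ.filter (fun i : Fin n => (i : ℕ) < k) with hF
  have hFmap : (Finset.univ : Finset (Fin k)).map (Fin.castLEEmb hk) = F := by
    ext x
    simp only [Finset.mem_map, Finset.mem_univ, true_and, hF,
      Finset.mem_filter, Fin.castLEEmb_apply]
    constructor
    · rintro ⟨i, rfl⟩; exact i.2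
    · intro hx; exact ⟨⟨x.1, hx⟩, by simp [Fin.ext_iff]⟩
  have hFsum : ∑ i ∈ F, α i = ∑ i : Fin k, α (Fin.castLE hk i) := by
    rw [← hFmap, Finset.sum_map]; rfl
  have hFcard : F.card = k := by
    rw [← hFmap, Finset.card_map, Finset.card_univ, Fintype.card_fin]
  rw [← hFsum]
  have hcard2 : (T \ F).card = (F \ T).card :=
    Finset.card_sdiff_comm (by rw [hT, hFcard])
  set e := Finset.equivOfCardEq hcard2 with he
  have hle : ∑ x ∈ T \ F, α x ≤ ∑ x ∈ F \ T, α x := by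
    rw [← Finset.sum_attach (T \ F) α, ← Finset.sum_attach (F \ T) α]
    have h2 : ∑ x ∈ (T \ F).attach, α (e x).1 = ∑ y ∈ (F \ T).attach, α y.1 := by
      rw [← Finset.univ_eq_attach, ← Finset.univ_eq_attach]
      exact Equiv.sum_comp e (fun y => α y.1)
    rw [← h2]
    refine Finset.sum_le_sum fun x _ => ?_
    refine hα ?_
    have hx : ¬ ((x.1 : ℕ) < k) := by
      have := x.2; rw [Finset.mem_sdiff] at this
      simpa [hF] using this.2
    have hex : ((e x).1 : ℕ) < k := by
      have := (e x).2; rw [Finset.mem_sdiff] at this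
      simpa [hF] using this.1
    exact Fin.le_def.mpr (by omega)
  have hsplitT := Finset.sum_inter_add_sum_sdiff T F α
  have hsplitF := Finset.sum_inter_add_sum_sdiff F T α
  rw [Finset.inter_comm] at hsplitF
  linarith

open Finset in
theorem abel_aux (c d : ℕ → ℝ) : ∀ N : ℕ, (∀ k, k ≤ N → 0 ≤ ∑ i ∈ Finset.range k, d i) →
    (∀ i, i + 2 ≤ N → c (i + 1) ≤ c i) →
    (∑ i ∈ Finset.range N, d i) * c (N - 1) ≤ ∑ i ∈ Finset.range N, d i * c i := by
  intro N
  induction N with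
  | zero => simp
  | succ N ih =>
    intro hD hc
    rw [Finset.sum_range_succ, Finset.sum_range_succ]
    have ih' := ih (fun k hk => hD k (hk.trans (Nat.le_succ N)))
      (fun i hi => hc i (hi.trans (Nat.le_succ N)))
    have hDN := hD N (Nat.le_succ N)
    have hcstep : c N ≤ c (N - 1) := by
      rcases Nat.eq_zero_or_pos N with h0 | h1
      · subst h0; simp
      · have h2 : (N - 1) + 1 = N := Nat.succ_pred_eq_of_pos h1
        have h3 := hc (N - 1) (by omega)
        rwa [h2] at h3
    have hNN : N + 1 - 1 = N := rfl
    rw [hNN]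
    calc (∑ i ∈ Finset.range N, d i + d N) * c N
        = (∑ i ∈ Finset.range N, d i) * c N + d N * c N := by ring
      _ ≤ (∑ i ∈ Finset.range N, d i) * c (N - 1) + d N * c N := by
          have := mul_le_mul_of_nonneg_left hcstep hDN
          linarith
      _ ≤ (∑ i ∈ Finset.range N, d i * c i) + d N * c N := by linarith

open Finset in
theorem maj_sq (N : ℕ) (x y : ℕ → ℝ)
    (hxy : ∀ i, i + 2 ≤ N → x (i + 1) + y (i + 1) ≤ x i + y i)
    (hpart : ∀ k, k ≤ N → ∑ i ∈ Finset.range k, x i ≤ ∑ i ∈ Finset.range k, y i)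
    (htot : ∑ i ∈ Finset.range N, x i = ∑ i ∈ Finset.range N, y i) :
    ∑ i ∈ Finset.range N, (x i) ^ 2 ≤ ∑ i ∈ Finset.range N, (y i) ^ 2 := by
  have h := abel_aux (fun i => y i + x i) (fun i => y i - x i) N
    (fun k hk => by
      have := hpart k hk
      rw [Finset.sum_sub_distrib]
      linarith)
    (fun i hi => by have := hxy i hi; linarith)
  have htot' : ∑ i ∈ Finset.range N, (y i - x i) = 0 := by
    rw [Finset.sum_sub_distrib]; rw [htot]; ring
  rw [htot', zero_mul] at h
  have h2 : ∑ i ∈ Finset.range N, ((y i) ^ 2 - (x i) ^ 2)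
      = ∑ i ∈ Finset.range N, (y i - x i) * (y i + x i) :=
    Finset.sum_congr rfl fun i _ => by ring
  have h3 : ∑ i ∈ Finset.range N, ((y i) ^ 2 - (x i) ^ 2)
      = ∑ i ∈ Finset.range N, (y i) ^ 2 - ∑ i ∈ Finset.range N, (x i) ^ 2 :=
    Finset.sum_sub_distrib _ _
  linarith [h2 ▸ h3.symm.trans h2]

theorem posdef_conj {n k : ℕ} {A : Matrix (Fin n) (Fin n) ℝ} (hA : A.PosDef)
    (V : Matrix (Fin n) (Fin k) ℝ) (hV : Vᵀ * V = 1) : (Vᵀ * A * V).PosDef := by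
  have hAt : Aᵀ = A := by
    have := hA.1
    rwa [Matrix.IsHermitian, Matrix.conjTranspose_eq_transpose_of_trivial] at this
  refine Matrix.PosDef.of_dotProduct_mulVec_pos ?_ ?_
  · show (Vᵀ * A * V)ᴴ = _
    rw [Matrix.conjTranspose_eq_transpose_of_trivial, Matrix.transpose_mul, Matrix.transpose_mul,
      Matrix.transpose_transpose, hAt, Matrix.mul_assoc]
  · intro x hx
    have hVx : V *ᵥ x ≠ 0 := by
      intro h0
      apply hx
      have h1 : Vᵀ *ᵥ (V *ᵥ x) = x := by
        rw [Matrix.mulVec_mulVec, hV, Matrix.one_mulVec]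
      rw [h0, Matrix.mulVec_zero] at h1
      exact h1.symm
    have h2 : star x ⬝ᵥ ((Vᵀ * A * V) *ᵥ x) = star (V *ᵥ x) ⬝ᵥ (A *ᵥ (V *ᵥ x)) := by
      simp only [star_trivial]
      rw [← Matrix.mulVec_mulVec, ← Matrix.mulVec_mulVec, Matrix.dotProduct_mulVec,
        Matrix.vecMul_transpose]
    rw [h2]
    exact hA.dotProduct_mulVec_pos hVx

theorem stmt4 {n : ℕ} (A B : Matrix (Fin n) (Fin n) ℝ)
    (hA : A.PosDef) (hB : B.PosDef)
    (hC : (matSqrt A * B * matSqrt A).IsHermitian)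
    (α β γ : Fin n → ℝ) (hαanti : Antitone α) (hβanti : Antitone β) (hγanti : Antitone γ)
    (σA : Equiv.Perm (Fin n)) (hσA : ∀ i, Real.exp (α i) = hA.1.eigenvalues (σA i))
    (σB : Equiv.Perm (Fin n)) (hσB : ∀ i, Real.exp (β i) = hB.1.eigenvalues (σB i))
    (σC : Equiv.Perm (Fin n)) (hσC : ∀ i, Real.exp (γ i) = hC.eigenvalues (σC i)) :
    ∑ i, (γ i) ^ 2 ≤
      (Real.sqrt (∑ i, (α i) ^ 2) + Real.sqrt (∑ i, (β i) ^ 2)) ^ 2 := by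
  classical
  have hAeig : ∀ j, hA.1.eigenvalues j = Real.exp (α (σA.symm j)) := fun j => by
    rw [hσA (σA.symm j), Equiv.apply_symm_apply]
  have hBeig : ∀ j, hB.1.eigenvalues j = Real.exp (β (σB.symm j)) := fun j => by
    rw [hσB (σB.symm j), Equiv.apply_symm_apply]
  have hCeig : ∀ j, hC.eigenvalues j = Real.exp (γ (σC.symm j)) := fun j => by
    rw [hσC (σC.symm j), Equiv.apply_symm_apply]
  have hAnn : ∀ j, 0 ≤ hA.1.eigenvalues j := fun j => by
    rw [hAeig]; exact (Real.exp_pos _).le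
  have hS : matSqrt A * matSqrt A = A := matSqrt_mul_self hA.1 hAnn
  have hSt : (matSqrt A)ᵀ = matSqrt A := matSqrt_transpose hA.1
  have hdetA : A.det = Real.exp (∑ i, α i) := by
    rw [hA.1.det_eq_prod_eigenvalues]
    simp only [RCLike.ofReal_real_eq_id, id_eq]
    calc ∏ j, hA.1.eigenvalues j = ∏ j, Real.exp (α (σA.symm j)) :=
          Finset.prod_congr rfl fun j _ => hAeig j
      _ = ∏ i, Real.exp (α i) := Equiv.prod_comp σA.symm (fun i => Real.exp (α i))
      _ = Real.exp (∑ i, α i) := (Real.exp_sum _ _).symm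
  have hdetB : B.det = Real.exp (∑ i, β i) := by
    rw [hB.1.det_eq_prod_eigenvalues]
    simp only [RCLike.ofReal_real_eq_id, id_eq]
    calc ∏ j, hB.1.eigenvalues j = ∏ j, Real.exp (β (σB.symm j)) :=
          Finset.prod_congr rfl fun j _ => hBeig j
      _ = ∏ i, Real.exp (β i) := Equiv.prod_comp σB.symm (fun i => Real.exp (β i))
      _ = Real.exp (∑ i, β i) := (Real.exp_sum _ _).symm
  have hdetC : (matSqrt A * B * matSqrt A).det = Real.exp (∑ i, γ i) := by
    rw [hC.det_eq_prod_eigenvalues]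
    simp only [RCLike.ofReal_real_eq_id, id_eq]
    calc ∏ j, hC.eigenvalues j = ∏ j, Real.exp (γ (σC.symm j)) :=
          Finset.prod_congr rfl fun j _ => hCeig j
      _ = ∏ i, Real.exp (γ i) := Equiv.prod_comp σC.symm (fun i => Real.exp (γ i))
      _ = Real.exp (∑ i, γ i) := (Real.exp_sum _ _).symm
  have hdetSS : (matSqrt A).det * (matSqrt A).det = A.det := by
    rw [← Matrix.det_mul, hS]
  have hdetSne : (matSqrt A).det ≠ 0 := by
    intro h
    rw [h, mul_zero] at hdetSS
    rw [hdetA] at hdetSS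
    exact (Real.exp_pos _).ne hdetSS
  have hsum_tot : ∑ i, γ i = ∑ i, (α i + β i) := by
    apply Real.exp_injective
    rw [← hdetC]
    have h1 : (matSqrt A * B * matSqrt A).det = A.det * B.det := by
      rw [Matrix.det_mul, Matrix.det_mul]
      have h2 : (matSqrt A).det * B.det * (matSqrt A).det
          = ((matSqrt A).det * (matSqrt A).det) * B.det := by ring
      rw [h2, hdetSS]
    rw [h1, hdetA, hdetB, ← Real.exp_add, Finset.sum_add_distrib]
  have hkey : ∀ (k : ℕ) (hk : k ≤ n), ∑ i : Fin k, γ (Fin.castLE hk i) ≤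
      ∑ i : Fin k, (α (Fin.castLE hk i) + β (Fin.castLE hk i)) := by
    intro k hk
    set UC : Matrix (Fin n) (Fin n) ℝ :=
      (hC.eigenvectorUnitary : Matrix (Fin n) (Fin n) ℝ) with hUCdef
    have hUCtU : UCᵀ * UC = 1 := by
      rw [← real_herm_star_eq]
      exact (Matrix.mem_unitaryGroup_iff').mp (hC.eigenvectorUnitary).2
    have hUCd : UCᵀ * (matSqrt A * B * matSqrt A) * UC = Matrix.diagonal hC.eigenvalues := by
      have h := hC.spectral_theorem
      rw [Unitary.conjStarAlgAut_apply, real_herm_star_eq, ← hUCdef] at h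
      simp only [RCLike.ofReal_real_eq_id, Function.id_comp] at h
      nth_rw 1 [h]
      simp only [Matrix.mul_assoc]
      rw [← Matrix.mul_assoc UCᵀ UC, hUCtU, Matrix.one_mul, Matrix.mul_one]
    set g : Fin k → Fin n := fun i => σC (Fin.castLE hk i) with hg
    have hginj : Function.Injective g :=
      σC.injective.comp (Fin.castLE_injective hk)
    set V : Matrix (Fin n) (Fin k) ℝ := UC.submatrix id g with hVdef
    have hVt : Vᵀ = UCᵀ.submatrix g id := by
      rw [hVdef, Matrix.transpose_submatrix]
    have hVV : Vᵀ * V = 1 := by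
      rw [hVt, hVdef]
      rw [← Matrix.submatrix_mul UCᵀ UC g id g Function.bijective_id, hUCtU,
        Matrix.submatrix_one _ hginj]
    have hVCV : Vᵀ * (matSqrt A * B * matSqrt A) * V
        = Matrix.diagonal (fun i => hC.eigenvalues (g i)) := by
      rw [hVt, hVdef]
      conv_lhs => rw [show (matSqrt A * B * matSqrt A) =
        (matSqrt A * B * matSqrt A).submatrix id id from (Matrix.submatrix_id_id _).symm]
      rw [← Matrix.submatrix_mul UCᵀ (matSqrt A * B * matSqrt A) g id id Function.bijective_id]
      rw [← Matrix.submatrix_mul (UCᵀ * (matSqrt A * B * matSqrt A)) UC g id g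
        Function.bijective_id]
      rw [hUCd, Matrix.submatrix_diagonal _ _ hginj]
      rfl
    have hdetVCV : (Vᵀ * (matSqrt A * B * matSqrt A) * V).det
        = Real.exp (∑ i : Fin k, γ (Fin.castLE hk i)) := by
      rw [hVCV, Matrix.det_diagonal]
      calc ∏ i : Fin k, hC.eigenvalues (g i)
          = ∏ i : Fin k, Real.exp (γ (Fin.castLE hk i)) := by
            refine Finset.prod_congr rfl fun i _ => ?_
            rw [hg]
            rw [← hσC (Fin.castLE hk i)]
        _ = Real.exp (∑ i : Fin k, γ (Fin.castLE hk i)) := (Real.exp_sum _ _).symm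
    set M : Matrix (Fin k) (Fin k) ℝ := Vᵀ * A * V with hMdef
    have hMpd : M.PosDef := posdef_conj hA V hVV
    have hMnn : ∀ i, 0 ≤ hMpd.1.eigenvalues i := fun i => (hMpd.eigenvalues_pos i).le
    set Rm : Matrix (Fin k) (Fin k) ℝ := matSqrt M with hRmdef
    have hRR : Rm * Rm = M := matSqrt_mul_self hMpd.1 hMnn
    have hRt : Rmᵀ = Rm := matSqrt_transpose hMpd.1
    have hRRdet : Rm.det * Rm.det = M.det := by rw [← Matrix.det_mul, hRR]
    have hRdet : Rm.det ≠ 0 := by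
      intro h
      rw [h, mul_zero] at hRRdet
      exact hMpd.det_pos.ne' hRRdet.symm
    have hRunit : IsUnit Rm.det := isUnit_iff_ne_zero.mpr hRdet
    set N : Matrix (Fin n) (Fin k) ℝ := matSqrt A * V with hNdef
    have hNt : Nᵀ = Vᵀ * matSqrt A := by rw [hNdef, Matrix.transpose_mul, hSt]
    have hMN : M = Nᵀ * N := by
      rw [hNt, hNdef, hMdef]
      conv_lhs => rw [← hS]
      simp only [Matrix.mul_assoc]
    set Q : Matrix (Fin n) (Fin k) ℝ := N * Rm⁻¹ with hQdef
    have hQt : Qᵀ = Rm⁻¹ * Nᵀ := by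
      rw [hQdef, Matrix.transpose_mul, Matrix.transpose_nonsing_inv, hRt]
    have hQQ : Qᵀ * Q = 1 := by
      rw [hQt, hQdef]
      rw [Matrix.mul_assoc, ← Matrix.mul_assoc Nᵀ N Rm⁻¹, ← hMN, ← hRR]
      rw [Matrix.mul_assoc Rm Rm Rm⁻¹, Matrix.mul_nonsing_inv _ hRunit, Matrix.mul_one,
        Matrix.nonsing_inv_mul _ hRunit]
    have hNQR : N = Q * Rm := by
      rw [hQdef, Matrix.nonsing_inv_mul_cancel_right _ _ hRunit]
    have hVCV2 : Vᵀ * (matSqrt A * B * matSqrt A) * V = Rm * (Qᵀ * B * Q) * Rm := by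
      have h1 : Vᵀ * (matSqrt A * B * matSqrt A) * V = Nᵀ * B * N := by
        rw [hNt, hNdef]
        simp only [Matrix.mul_assoc]
      rw [h1, hNQR, Matrix.transpose_mul, hRt]
      simp only [Matrix.mul_assoc]
    have hdet_split : (Vᵀ * (matSqrt A * B * matSqrt A) * V).det
        = M.det * (Qᵀ * B * Q).det := by
      rw [hVCV2, Matrix.det_mul, Matrix.det_mul]
      have h2 : Rm.det * (Qᵀ * B * Q).det * Rm.det
          = (Rm.det * Rm.det) * (Qᵀ * B * Q).det := by ring
      rw [h2, hRRdet]
    have hboundA : M.det ≤ Real.exp (∑ i : Fin k, α (Fin.castLE hk i)) := by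
      rw [hMdef]
      apply det_conj_le hA.1 V hVV
      intro T hT
      calc ∏ i ∈ T, hA.1.eigenvalues i = ∏ i ∈ T, Real.exp (α (σA.symm i)) :=
            Finset.prod_congr rfl fun i _ => hAeig i
        _ = Real.exp (∑ i ∈ T, α (σA.symm i)) := (Real.exp_sum _ _).symm
        _ = Real.exp (∑ j ∈ T.image σA.symm, α j) := by
            rw [Finset.sum_image (fun x _ y _ h => σA.symm.injective h)]
        _ ≤ Real.exp (∑ i : Fin k, α (Fin.castLE hk i)) := by
            apply Real.exp_le_exp.mpr
            apply sum_subset_le_topk hk α hαanti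
            rw [Finset.card_image_of_injective _ σA.symm.injective, hT]
    have hboundB : (Qᵀ * B * Q).det ≤ Real.exp (∑ i : Fin k, β (Fin.castLE hk i)) := by
      apply det_conj_le hB.1 Q hQQ
      intro T hT
      calc ∏ i ∈ T, hB.1.eigenvalues i = ∏ i ∈ T, Real.exp (β (σB.symm i)) :=
            Finset.prod_congr rfl fun i _ => hBeig i
        _ = Real.exp (∑ i ∈ T, β (σB.symm i)) := (Real.exp_sum _ _).symm
        _ = Real.exp (∑ j ∈ T.image σB.symm, β j) := by
            rw [Finset.sum_image (fun x _ y _ h => σB.symm.injective h)]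
        _ ≤ Real.exp (∑ i : Fin k, β (Fin.castLE hk i)) := by
            apply Real.exp_le_exp.mpr
            apply sum_subset_le_topk hk β hβanti
            rw [Finset.card_image_of_injective _ σB.symm.injective, hT]
    have hQBQpos : (0:ℝ) < (Qᵀ * B * Q).det := (posdef_conj hB Q hQQ).det_pos
    have hfinal : Real.exp (∑ i : Fin k, γ (Fin.castLE hk i)) ≤
        Real.exp (∑ i : Fin k, α (Fin.castLE hk i)) *
          Real.exp (∑ i : Fin k, β (Fin.castLE hk i)) := by
      rw [← hdetVCV, hdet_split]
      exact mul_le_mul hboundA hboundB hQBQpos.le (Real.exp_pos _).le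
    rw [← Real.exp_add] at hfinal
    have := Real.exp_le_exp.mp hfinal
    rw [← Finset.sum_add_distrib] at this
    exact this
  -- transfer to ℕ-indexed sums
  have hconv : ∀ (k : ℕ) (hk : k ≤ n) (f : Fin n → ℝ),
      ∑ i : Fin k, f (Fin.castLE hk i)
        = ∑ i ∈ Finset.range k, (fun i => if h : i < n then f ⟨i, h⟩ else 0) i := by
    intro k hk f
    rw [← Fin.sum_univ_eq_sum_range]
    refine Finset.sum_congr rfl fun i _ => ?_
    have hi : (i : ℕ) < n := lt_of_lt_of_le i.2 hk
    simp only [hi, dif_pos]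
    rfl
  have hsq : ∑ i ∈ Finset.range n, (if h : i < n then γ ⟨i, h⟩ else 0) ^ 2
      ≤ ∑ i ∈ Finset.range n, (if h : i < n then α ⟨i, h⟩ + β ⟨i, h⟩ else 0) ^ 2 := by
    apply maj_sq n
    · intro i hi
      have h1 : i < n := by omega
      have h2 : i + 1 < n := by omega
      simp only [h1, h2, dif_pos]
      have hle : (⟨i, h1⟩ : Fin n) ≤ ⟨i + 1, h2⟩ := by
        simp [Fin.le_def]
      have := hγanti hle
      have := hαanti hle
      have := hβanti hle
      linarith
    · intro k hk
      have h1 := hkey k hk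
      rw [hconv k hk γ, hconv k hk (fun i => α i + β i)] at h1
      exact h1
    · have e1 : ∑ i ∈ Finset.range n, (if h : i < n then γ ⟨i, h⟩ else 0)
          = ∑ i : Fin n, γ i := by
        rw [← Fin.sum_univ_eq_sum_range]
        exact Finset.sum_congr rfl fun i _ => by simp [i.2]
      have e2 : ∑ i ∈ Finset.range n, (if h : i < n then α ⟨i, h⟩ + β ⟨i, h⟩ else 0)
          = ∑ i : Fin n, (α i + β i) := by
        rw [← Fin.sum_univ_eq_sum_range]
        exact Finset.sum_congr rfl fun i _ => by simp [i.2]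
      rw [e1, e2]
      exact hsum_tot
  have hfin : ∑ i, γ i ^ 2 ≤ ∑ i, (α i + β i) ^ 2 := by
    have e1 : ∑ i, γ i ^ 2
        = ∑ i ∈ Finset.range n, (if h : i < n then γ ⟨i, h⟩ else 0) ^ 2 := by
      rw [← Fin.sum_univ_eq_sum_range]
      refine Finset.sum_congr rfl fun i _ => ?_
      simp [i.2]
    have e2 : ∑ i, (α i + β i) ^ 2
        = ∑ i ∈ Finset.range n, (if h : i < n then α ⟨i, h⟩ + β ⟨i, h⟩ else 0) ^ 2 := by
      rw [← Fin.sum_univ_eq_sum_range]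
      refine Finset.sum_congr rfl fun i _ => ?_
      simp [i.2]
    rw [e1, e2]
    exact hsq
  -- Cauchy-Schwarz finish
  have hA2 : (0:ℝ) ≤ ∑ i, α i ^ 2 := Finset.sum_nonneg fun i _ => sq_nonneg _
  have hB2 : (0:ℝ) ≤ ∑ i, β i ^ 2 := Finset.sum_nonneg fun i _ => sq_nonneg _
  have hab : ∑ i, α i * β i ≤ Real.sqrt (∑ i, α i ^ 2) * Real.sqrt (∑ i, β i ^ 2) := by
    have h1 := Finset.sum_mul_sq_le_sq_mul_sq Finset.univ α β
    have h2 : Real.sqrt ((∑ i, α i * β i) ^ 2)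
        ≤ Real.sqrt ((∑ i, α i ^ 2) * ∑ i, β i ^ 2) := Real.sqrt_le_sqrt h1
    rw [Real.sqrt_sq_eq_abs, Real.sqrt_mul hA2] at h2
    exact (le_abs_self _).trans h2
  have hexp : ∑ i, (α i + β i) ^ 2
      = ∑ i, α i ^ 2 + 2 * ∑ i, α i * β i + ∑ i, β i ^ 2 := by
    have h1 : ∀ i : Fin n, (α i + β i) ^ 2 = α i ^ 2 + 2 * (α i * β i) + β i ^ 2 :=
      fun i => by ring
    simp_rw [h1]
    rw [Finset.sum_add_distrib, Finset.sum_add_distrib, ← Finset.mul_sum]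
  have hrhs : (Real.sqrt (∑ i, α i ^ 2) + Real.sqrt (∑ i, β i ^ 2)) ^ 2
      = ∑ i, α i ^ 2 + 2 * (Real.sqrt (∑ i, α i ^ 2) * Real.sqrt (∑ i, β i ^ 2))
        + ∑ i, β i ^ 2 := by
    rw [add_sq, Real.sq_sqrt hA2, Real.sq_sqrt hB2]
    ring
  linarith
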